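/- With the same setup: for $w_n,w\in\mathbb{G}$, if $w_n(x)\to w(x)$ for every continuity point $x$ of $w$, then $M_{w_n}^{-1}\to M_w^{-1}$ uniformly on every compact interval $[-N,N]$. -/

import Mathlib

open Filter Topology

/-- `w` is cadlag: right-continuous with left limits at every point. -/
def IsCadlag (w : ℝ → ℝ) : Prop :=
  (∀ x : ℝ, ContinuousWithinAt w (Set.Ici x) x) ∧
    ∀ x : ℝ, ∃ l : ℝ, Tendsto w (nhdsWithin x (Set.Iio x)) (𝓝 l)

/-- Membership in the space `𝔾`: cadlag `w` with `M_w(x) = x - w(x)` strictly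
increasing and tending to `±∞` at `±∞`. -/
def MemG (w : ℝ → ℝ) : Prop :=
  IsCadlag w ∧ StrictMono (fun x => x - w x) ∧
    Tendsto (fun x => x - w x) atTop atTop ∧
    Tendsto (fun x => x - w x) atBot atBot

/-- Generalized inverse of `M_w`. -/
noncomputable def Minv (w : ℝ → ℝ) (y : ℝ) : ℝ :=
  sInf {x : ℝ | y ≤ x - w x}


/-- Pólya: monotone functions converging pointwise to a continuous limit
converge uniformly on compacts. -/
lemma polya_unif {f : ℝ → ℝ} {fn : ℕ → ℝ → ℝ} (hmono : ∀ n, Monotone (fn n))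
    (hcont : Continuous f) (hpt : ∀ y : ℝ, Tendsto (fun n => fn n y) atTop (𝓝 (f y)))
    {s : Set ℝ} (hs : IsCompact s) : TendstoUniformlyOn fn f atTop s := by
  rw [Metric.tendstoUniformlyOn_iff]
  intro ε hε
  -- for each x, a radius where f varies by < ε/4
  have hch : ∀ x : ℝ, ∃ δ : ℝ, 0 < δ ∧ ∀ t : ℝ, |t - x| < δ → |f t - f x| < ε / 4 := by
    intro x
    have := Metric.continuousAt_iff.1 (hcont.continuousAt (x := x)) (ε / 4) (by linarith)
    obtain ⟨δ, hδ, h⟩ := this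
    exact ⟨δ, hδ, fun t ht => by simpa [Real.dist_eq] using h (by simpa [Real.dist_eq] using ht)⟩
  choose δ hδpos hδ using hch
  set U : ℝ → Set ℝ := fun x => Set.Ioo (x - δ x / 2) (x + δ x / 2) with hU
  have hUnhds : ∀ x ∈ s, U x ∈ 𝓝 x := fun x _ =>
    Ioo_mem_nhds (by have := hδpos x; linarith) (by have := hδpos x; linarith)
  obtain ⟨T, -, hTcov⟩ := hs.elim_nhds_subcover U hUnhds
  have hev : ∀ᶠ n in atTop, ∀ x ∈ T,
      fn n (x - δ x / 2) ∈ Set.Ioo (f (x - δ x / 2) - ε / 4) (f (x - δ x / 2) + ε / 4) ∧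
      fn n (x + δ x / 2) ∈ Set.Ioo (f (x + δ x / 2) - ε / 4) (f (x + δ x / 2) + ε / 4) := by
    rw [Filter.eventually_all_finset]
    intro x _
    exact ((hpt (x - δ x / 2)).eventually_mem (Ioo_mem_nhds (by linarith) (by linarith))).and
      ((hpt (x + δ x / 2)).eventually_mem (Ioo_mem_nhds (by linarith) (by linarith)))
  filter_upwards [hev] with n hn y hy
  obtain ⟨x, hxT, hyx⟩ := Set.mem_iUnion₂.1 (hTcov hy)
  obtain ⟨ha, hb⟩ := hn x hxT
  simp only [hU, Set.mem_Ioo] at hyx ha hb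
  have hfa : |f (x - δ x / 2) - f x| < ε / 4 := by
    apply hδ; rw [abs_sub_comm]; rw [show x - (x - δ x / 2) = δ x / 2 by ring]
    rw [abs_of_pos (by have := hδpos x; linarith)]; have := hδpos x; linarith
  have hfb : |f (x + δ x / 2) - f x| < ε / 4 := by
    apply hδ; rw [show x + δ x / 2 - x = δ x / 2 by ring]
    rw [abs_of_pos (by have := hδpos x; linarith)]; have := hδpos x; linarith
  have hfy : |f y - f x| < ε / 4 := by
    apply hδ; rw [abs_lt]; have := hδpos x; constructor <;> linarith [hyx.1, hyx.2]
  have h1 : fn n (x - δ x / 2) ≤ fn n y := (hmono n) (by linarith [hyx.1])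
  have h2 : fn n y ≤ fn n (x + δ x / 2) := (hmono n) (by linarith [hyx.2])
  rw [Real.dist_eq, abs_lt]
  rw [abs_lt] at hfa hfb hfy
  constructor <;> [linarith [ha.1]; linarith [hb.2]]


namespace MemGAux

variable {w : ℝ → ℝ}

lemma set_nonempty (hw : MemG w) (y : ℝ) : {x : ℝ | y ≤ x - w x}.Nonempty := by
  obtain ⟨x, hx⟩ := (hw.2.2.1.eventually_ge_atTop y).exists
  exact ⟨x, hx⟩

lemma set_bddBelow (hw : MemG w) (y : ℝ) : BddBelow {x : ℝ | y ≤ x - w x} := by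
  obtain ⟨b, hb⟩ := (hw.2.2.2.eventually (eventually_lt_atBot y)).exists_forall_of_atBot
  exact ⟨b, fun x hx => le_of_not_gt fun h => absurd (hx : y ≤ x - w x) (not_le.2 (hb x h.le))⟩

lemma le_M_Minv (hw : MemG w) (y : ℝ) : y ≤ Minv w y - w (Minv w y) := by
  set S := {x : ℝ | y ≤ x - w x} with hS
  have hne := set_nonempty hw y
  have hbd := set_bddBelow hw y
  have hsub : S ⊆ Set.Ici (sInf S) := fun x hx => csInf_le hbd hx
  have hcl : sInf S ∈ closure S := csInf_mem_closure hne hbd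
  have hnb : (𝓝[S] (sInf S)).NeBot := mem_closure_iff_nhdsWithin_neBot.1 hcl
  have hc : ContinuousWithinAt (fun x => x - w x) S (sInf S) :=
    ((continuous_id.continuousWithinAt).sub (hw.1.1 (sInf S))).mono hsub
  have ht : Tendsto (fun x => x - w x) (𝓝[S] (sInf S)) (𝓝 (sInf S - w (sInf S))) := hc
  show y ≤ sInf S - w (sInf S)
  exact ge_of_tendsto ht (eventually_nhdsWithin_of_forall fun x hx => hx)

lemma Minv_le (hw : MemG w) {x y : ℝ} (h : y ≤ x - w x) : Minv w y ≤ x :=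
  csInf_le (set_bddBelow hw y) h

lemma lt_Minv (hw : MemG w) {x y : ℝ} (h : x - w x < y) : x < Minv w y := by
  by_contra hc
  push_neg at hc
  have := hw.2.1.monotone hc
  have := le_M_Minv hw y
  linarith

lemma Minv_mono (hw : MemG w) : Monotone (Minv w) := fun a b hab =>
  le_csInf (set_nonempty hw b) fun x hx => Minv_le hw (le_trans hab hx)

lemma dense_cont (hw : MemG w) : Dense {x : ℝ | ContinuousAt w x} := by
  have hM : Monotone (fun x => x - w x) := hw.2.1.monotone
  have hcnt : {x : ℝ | ¬ContinuousAt w x}.Countable := by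
    apply (hM.countable_not_continuousAt).mono
    intro x hx
    simp only [Set.mem_setOf_eq] at hx ⊢
    intro hc
    exact hx ((continuousAt_id.sub hc).congr (Filter.Eventually.of_forall fun t => by simp))
  have := hcnt.dense_compl ℝ
  convert this using 1
  ext x
  simp

lemma Minv_continuous (hw : MemG w) : Continuous (Minv w) := by
  rw [continuous_iff_continuousAt]
  intro y
  rw [ContinuousAt, tendsto_order]
  constructor
  · intro a ha
    set x := (a + Minv w y) / 2 with hx
    have hax : a < x := by simp only [hx]; linarith
    have hxy : x < Minv w y := by simp only [hx]; linarith
    have hMx : x - w x < y := by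
      by_contra hc
      exact absurd (Minv_le hw (le_of_not_gt hc)) (not_le.2 hxy)
    filter_upwards [Ioi_mem_nhds hMx] with y' hy'
    exact lt_trans hax (lt_Minv hw hy')
  · intro b hb
    set x := (Minv w y + b) / 2 with hx
    have hxy : Minv w y < x := by simp only [hx]; linarith
    have hxb : x < b := by simp only [hx]; linarith
    have hMx : y < x - w x := lt_of_le_of_lt (le_M_Minv hw y) (hw.2.1 hxy)
    filter_upwards [Iio_mem_nhds hMx] with y' hy'
    exact lt_of_le_of_lt (Minv_le hw hy'.le) hxb

end MemGAux

namespace MemGAux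

lemma Mconv {w : ℝ → ℝ} {wn : ℕ → ℝ → ℝ}
    (hconv : ∀ x : ℝ, ContinuousAt w x → Tendsto (fun n => wn n x) atTop (𝓝 (w x)))
    {x : ℝ} (hx : ContinuousAt w x) :
    Tendsto (fun n => x - wn n x) atTop (𝓝 (x - w x)) :=
  (tendsto_const_nhds).sub (hconv x hx)

lemma Minv_pointwise {w : ℝ → ℝ} {wn : ℕ → ℝ → ℝ}
    (hw : MemG w) (hwn : ∀ n, MemG (wn n))
    (hconv : ∀ x : ℝ, ContinuousAt w x → Tendsto (fun n => wn n x) atTop (𝓝 (w x)))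
    (y : ℝ) : Tendsto (fun n => Minv (wn n) y) atTop (𝓝 (Minv w y)) := by
  rw [tendsto_order]
  constructor
  · intro a ha
    -- pick continuity point x⁻ ∈ (a, Minv w y)
    obtain ⟨x, hxc, hxI⟩ := (dense_cont hw).exists_mem_open isOpen_Ioo
      (Set.nonempty_Ioo.2 ha)
    have hMx : x - w x < y := by
      by_contra hc
      exact absurd (Minv_le hw (le_of_not_gt hc)) (not_le.2 hxI.2)
    filter_upwards [(Mconv hconv hxc).eventually_mem (Iio_mem_nhds hMx)] with n hn
    exact lt_trans hxI.1 (lt_Minv (hwn n) hn)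
  · intro b hb
    obtain ⟨x, hxc, hxI⟩ := (dense_cont hw).exists_mem_open isOpen_Ioo
      (Set.nonempty_Ioo.2 hb)
    have hMx : y < x - w x := lt_of_le_of_lt (le_M_Minv hw y) (hw.2.1 hxI.1)
    filter_upwards [(Mconv hconv hxc).eventually_mem (Ioi_mem_nhds hMx)] with n hn
    exact lt_of_le_of_lt (Minv_le (hwn n) (le_of_lt hn)) hxI.2

end MemGAux

theorem pointwise_convergence_implies_inverse_uniform (w : ℝ → ℝ) (wn : ℕ → ℝ → ℝ)
    (hw : MemG w) (hwn : ∀ n, MemG (wn n))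
    (hconv : ∀ x : ℝ, ContinuousAt w x → Tendsto (fun n => wn n x) atTop (𝓝 (w x))) :
    ∀ N : ℝ, TendstoUniformlyOn (fun n => Minv (wn n)) (Minv w) atTop (Set.Icc (-N) N) := by
  intro N
  exact polya_unif (fun n => MemGAux.Minv_mono (hwn n)) (MemGAux.Minv_continuous hw)
    (MemGAux.Minv_pointwise hw hwn hconv) isCompact_Icc
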